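/- Let P and Q be polytopes in ℝ^d and let u be a vertex of P. Then the graph Γ_{P,Q}(u), namely the subgraph of the graph of P + Q induced on the set of vertices w of P + Q such that w = u + v for some vertex v of Q, is nonempty and connected. -/

import Mathlib

open Pointwise
open scoped RealInnerProductSpace

noncomputable section

abbrev Esp (d : ℕ) := EuclideanSpace ℝ (Fin d)

def IsPolytope {d : ℕ} (P : Set (Esp d)) : Prop :=
  ∃ s : Finset (Esp d), s.Nonempty ∧ P = convexHull ℝ (s : Set (Esp d))

def polyFace {d : ℕ} (P : Set (Esp d)) (c : Esp d) : Set (Esp d) :=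
  {x | x ∈ P ∧ ∀ y ∈ P, ⟪c, x⟫ ≤ ⟪c, y⟫}

def polyVerts {d : ℕ} (P : Set (Esp d)) : Set (Esp d) :=
  Set.extremePoints ℝ P

def f0 {d : ℕ} (P : Set (Esp d)) : ℕ := (polyVerts P).ncard

def polyAdj {d : ℕ} (P : Set (Esp d)) (u v : Esp d) : Prop :=
  u ≠ v ∧ u ∈ polyVerts P ∧ v ∈ polyVerts P ∧
    ∃ c : Esp d, polyFace P c = segment ℝ u v

def polyGraph {d : ℕ} (P : Set (Esp d)) : SimpleGraph (Esp d) where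
  Adj u v := polyAdj P u v
  symm := by
    refine ⟨?_⟩
    rintro u v ⟨hne, hu, hv, c, hc⟩
    exact ⟨hne.symm, hv, hu, c, by rw [hc, segment_symm]⟩
  loopless := by refine ⟨?_⟩; rintro u ⟨hne, -⟩; exact hne rfl

def polyDiam {d : ℕ} (P : Set (Esp d)) : ℕ :=
  sSup {n : ℕ | ∃ u ∈ polyVerts P, ∃ v ∈ polyVerts P, n = (polyGraph P).dist u v}

def polyDim {d : ℕ} (P : Set (Esp d)) : ℕ :=
  Module.finrank ℝ (affineSpan ℝ P).direction

def IsFace {d : ℕ} (P F : Set (Esp d)) : Prop := ∃ c : Esp d, polyFace P c = F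

def gammaVerts {d : ℕ} (P Q : Set (Esp d)) (u : Esp d) : Set (Esp d) :=
  {w ∈ polyVerts (P + Q) | ∃ v ∈ polyVerts Q, w = u + v}

open scoped Classical

namespace Aux

variable {d : ℕ}

/-- the argmin finset -/
def amin (V : Finset (Esp d)) (c : Esp d) : Finset (Esp d) :=
  V.filter (fun y => ∀ z ∈ V, ⟪c, y⟫ ≤ ⟪c, z⟫)

lemma amin_subset {V : Finset (Esp d)} {c : Esp d} : amin V c ⊆ V :=
  Finset.filter_subset _ _

lemma amin_nonempty {V : Finset (Esp d)} (hV : V.Nonempty) (c : Esp d) :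
    (amin V c).Nonempty := by
  obtain ⟨y, hy, hmin⟩ := V.exists_min_image (fun y => ⟪c, y⟫) hV
  exact ⟨y, Finset.mem_filter.2 ⟨hy, hmin⟩⟩

lemma mem_amin {V : Finset (Esp d)} {c y : Esp d} :
    y ∈ amin V c ↔ y ∈ V ∧ ∀ z ∈ V, ⟪c, y⟫ ≤ ⟪c, z⟫ := Finset.mem_filter

/-- the face of a hull of a finite set is the hull of the argmin. -/
lemma face_hull (V : Finset (Esp d)) (hV : V.Nonempty) (c : Esp d) :
    polyFace (convexHull ℝ (V : Set (Esp d))) c = convexHull ℝ (↑(amin V c) : Set (Esp d)) := by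
  obtain ⟨y₀, hy₀⟩ := amin_nonempty hV c
  have hy₀' := mem_amin.1 hy₀
  -- every x in hull V has ⟪c,x⟫ ≥ ⟪c,y₀⟫
  have hlow : ∀ x ∈ convexHull ℝ (V : Set (Esp d)), ⟪c, y₀⟫ ≤ ⟪c, x⟫ := by
    intro x hx
    have : (V : Set (Esp d)) ⊆ {w | ⟪c, y₀⟫ ≤ ⟪c, w⟫} := fun z hz => hy₀'.2 z hz
    have hconv : Convex ℝ {w : Esp d | ⟪c, y₀⟫ ≤ ⟪c, w⟫} :=
      convex_halfSpace_ge ⟨fun a b => inner_add_right c a b, fun r a => real_inner_smul_right c a r⟩ _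
    exact convexHull_min this hconv hx
  have hupp : ∀ x ∈ convexHull ℝ ((amin V c : Set (Esp d))), ⟪c, x⟫ ≤ ⟪c, y₀⟫ := by
    intro x hx
    have : ((amin V c : Set (Esp d))) ⊆ {w | ⟪c, w⟫ ≤ ⟪c, y₀⟫} := by
      intro z hz
      exact (mem_amin.1 hz).2 y₀ hy₀'.1
    have hconv : Convex ℝ {w : Esp d | ⟪c, w⟫ ≤ ⟪c, y₀⟫} :=
      convex_halfSpace_le ⟨fun a b => inner_add_right c a b, fun r a => real_inner_smul_right c a r⟩ _
    exact convexHull_min this hconv hx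
  apply Set.Subset.antisymm
  · rintro x ⟨hxP, hxmin⟩
    -- x has minimal value = ⟪c,y₀⟫
    have hy₀P : y₀ ∈ convexHull ℝ (V : Set (Esp d)) :=
      subset_convexHull ℝ _ hy₀'.1
    have hxval : ⟪c, x⟫ = ⟪c, y₀⟫ := le_antisymm (hxmin y₀ hy₀P) (hlow x hxP)
    rw [Finset.convexHull_eq] at hxP
    obtain ⟨w, hw0, hw1, hwx⟩ := hxP
    -- weights on non-minimizers vanish
    have hsum : ∑ y ∈ V, w y * (⟪c, y⟫ - ⟪c, y₀⟫) = 0 := by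
      have hx' : x = ∑ y ∈ V, w y • y := by
        rw [← hwx, Finset.centerMass_eq_of_sum_1 _ _ hw1]; rfl
      have hcx : ⟪c, x⟫ = ∑ y ∈ V, w y * ⟪c, y⟫ := by
        rw [hx', inner_sum]
        simp only [real_inner_smul_right]
      calc ∑ y ∈ V, w y * (⟪c, y⟫ - ⟪c, y₀⟫)
          = (∑ y ∈ V, w y * ⟪c, y⟫) - (∑ y ∈ V, w y) * ⟪c, y₀⟫ := by
            rw [Finset.sum_mul]; rw [← Finset.sum_sub_distrib]; congr 1; ext y; ring
        _ = 0 := by rw [← hcx, hw1, hxval]; ring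
    have hzero : ∀ y ∈ V, w y * (⟪c, y⟫ - ⟪c, y₀⟫) = 0 := by
      refine (Finset.sum_eq_zero_iff_of_nonneg ?_).1 hsum
      intro y hy
      exact mul_nonneg (hw0 y hy) (sub_nonneg.2 (hlow y (subset_convexHull ℝ _ (by exact_mod_cast hy))))
    have hmem : ∀ i ∈ V.filter (fun i => w i ≠ 0), id i ∈ (↑(amin V c) : Set (Esp d)) := by
      intro i hi
      obtain ⟨hiV, hiw⟩ := Finset.mem_filter.1 hi
      have : ⟪c, i⟫ - ⟪c, y₀⟫ = 0 := by
        rcases mul_eq_zero.1 (hzero i hiV) with h | h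
        · exact absurd h hiw
        · exact h
      have hival : ⟪c, i⟫ = ⟪c, y₀⟫ := by linarith
      refine Finset.mem_coe.2 (mem_amin.2 ⟨hiV, fun z hz => ?_⟩)
      show ⟪c, i⟫ ≤ ⟪c, z⟫
      rw [hival]; exact hy₀'.2 z hz
    have hxcm : (V.filter (fun i => w i ≠ 0)).centerMass w id = x := by
      rw [← hwx]; exact Finset.centerMass_filter_ne_zero (w := w) id
    rw [← hxcm]
    refine Finset.centerMass_mem_convexHull _ (fun i hi => hw0 i (Finset.mem_filter.1 hi).1) ?_ hmem
    rw [Finset.sum_filter_ne_zero, hw1]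
    exact one_pos
  · intro x hx
    refine ⟨convexHull_mono (by exact_mod_cast Finset.coe_subset.2 amin_subset) hx, ?_⟩
    intro y hy
    exact le_trans (hupp x hx) (hlow y hy)


lemma amin_eq_singleton_iff {V : Finset (Esp d)} {c u : Esp d} :
    amin V c = {u} ↔ u ∈ V ∧ ∀ y ∈ V, y ≠ u → ⟪c, u⟫ < ⟪c, y⟫ := by
  constructor
  · intro h
    have hu : u ∈ amin V c := h ▸ Finset.mem_singleton_self u
    obtain ⟨huV, humin⟩ := mem_amin.1 hu
    refine ⟨huV, fun y hy hne => ?_⟩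
    have hynot : y ∉ amin V c := by rw [h]; simpa using hne
    rcases lt_or_ge ⟪c, u⟫ ⟪c, y⟫ with h' | h'
    · exact h'
    · exfalso; apply hynot
      refine mem_amin.2 ⟨hy, fun z hz => le_trans h' (humin z hz)⟩
  · rintro ⟨huV, hstrict⟩
    apply Finset.ext
    intro y
    simp only [Finset.mem_singleton, mem_amin]
    constructor
    · rintro ⟨hyV, hymin⟩
      by_contra hne
      exact absurd (hymin u huV) (not_le.2 (hstrict y hyV hne))
    · rintro rfl
      refine ⟨huV, fun z hz => ?_⟩
      rcases eq_or_ne z y with rfl | hne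
      · exact le_rfl
      · exact le_of_lt (hstrict z hz hne)

lemma face_singleton_iff {V : Finset (Esp d)} (hV : V.Nonempty) {c u : Esp d} :
    polyFace (convexHull ℝ (V : Set (Esp d))) c = {u} ↔ amin V c = {u} := by
  rw [face_hull V hV c]
  constructor
  · intro h
    have hsub : (↑(amin V c) : Set (Esp d)) ⊆ {u} :=
      (subset_convexHull ℝ _).trans h.subset
    obtain ⟨y, hy⟩ := amin_nonempty hV c
    have : y = u := hsub hy
    subst this
    apply Finset.eq_singleton_iff_unique_mem.2
    exact ⟨hy, fun z hz => hsub hz⟩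
  · intro h
    rw [h]
    simp

lemma isExtreme_face (P : Set (Esp d)) (c : Esp d) : IsExtreme ℝ P (polyFace P c) := by
  constructor
  · exact fun x hx => hx.1
  · rintro x1 hx1 x2 hx2 x ⟨hxP, hxmin⟩ hseg
    obtain ⟨a, b, ha, hb, hab, hx⟩ := hseg
    have h1 : ⟪c, x⟫ ≤ ⟪c, x1⟫ := hxmin x1 hx1
    have h2 : ⟪c, x⟫ ≤ ⟪c, x2⟫ := hxmin x2 hx2
    have hxval : ⟪c, x⟫ = a * ⟪c, x1⟫ + b * ⟪c, x2⟫ := by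
      rw [← hx, inner_add_right, real_inner_smul_right, real_inner_smul_right]
    have key : a * ⟪c, x⟫ + b * ⟪c, x⟫ = ⟪c, x⟫ := by rw [← add_mul, hab, one_mul]
    have he1 : ⟪c, x1⟫ = ⟪c, x⟫ := by
      by_contra hne
      have hlt : ⟪c, x⟫ < ⟪c, x1⟫ := lt_of_le_of_ne h1 (Ne.symm hne)
      linarith [mul_lt_mul_of_pos_left hlt ha, mul_le_mul_of_nonneg_left h2 hb.le]
    have he2 : ⟪c, x2⟫ = ⟪c, x⟫ := by
      by_contra hne
      have hlt : ⟪c, x⟫ < ⟪c, x2⟫ := lt_of_le_of_ne h2 (Ne.symm hne)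
      linarith [mul_lt_mul_of_pos_left hlt hb, mul_le_mul_of_nonneg_left h1 ha.le]
    exact ⟨hx1, fun y hy => he1 ▸ hxmin y hy⟩

lemma face_singleton_extreme {P : Set (Esp d)} {c w : Esp d}
    (h : polyFace P c = {w}) : w ∈ polyVerts P := by
  have := isExtreme_face P c
  rw [h] at this
  exact isExtreme_singleton.1 this

lemma vertex_exposed {V : Finset (Esp d)} (hV : V.Nonempty) {u : Esp d}
    (hu : u ∈ polyVerts (convexHull ℝ (V : Set (Esp d)))) :
    ∃ c : Esp d, amin V c = {u} := by
  classical
  have huV : u ∈ V := by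
    have := extremePoints_convexHull_subset (𝕜 := ℝ) (A := (V : Set (Esp d))) hu
    exact_mod_cast this
  rcases Finset.eq_empty_or_nonempty (V.erase u) with he | hne
  · refine ⟨0, ?_⟩
    have hVu : V = {u} := by
      apply Finset.eq_singleton_iff_unique_mem.2
      refine ⟨huV, fun z hz => ?_⟩
      by_contra hne'
      exact absurd (Finset.mem_erase.2 ⟨hne', hz⟩) (he ▸ Finset.notMem_empty z)
    rw [amin_eq_singleton_iff]
    refine ⟨huV, fun y hy hne' => absurd (hVu ▸ hy) (by simpa using hne')⟩
  · -- u is not in the hull of the other points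
    have hconv := convex_convexHull ℝ (V : Set (Esp d))
    have hdiff := (hconv.mem_extremePoints_iff_mem_diff_convexHull_diff).1 hu
    have hnot : u ∉ convexHull ℝ ((V.erase u : Finset (Esp d)) : Set (Esp d)) := by
      intro hmem
      apply hdiff.2
      apply convexHull_mono ?_ hmem
      intro z hz
      rw [Finset.coe_erase] at hz
      exact ⟨subset_convexHull ℝ _ hz.1, hz.2⟩
    have hclosed : IsClosed (convexHull ℝ ((V.erase u : Finset (Esp d)) : Set (Esp d))) :=
      ((V.erase u).finite_toSet.isCompact_convexHull ℝ).isClosed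
    obtain ⟨f, s, hfs, hf⟩ := geometric_hahn_banach_point_closed
      (convex_convexHull ℝ _) hclosed hnot
    refine ⟨(InnerProductSpace.toDual ℝ (Esp d)).symm f, ?_⟩
    rw [amin_eq_singleton_iff]
    refine ⟨huV, fun y hy hney => ?_⟩
    have hyh : y ∈ convexHull ℝ ((V.erase u : Finset (Esp d)) : Set (Esp d)) :=
      subset_convexHull ℝ _ (by exact_mod_cast Finset.mem_erase.2 ⟨hney, hy⟩)
    have := hf y hyh
    rw [InnerProductSpace.toDual_symm_apply, InnerProductSpace.toDual_symm_apply]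
    linarith

lemma face_add (P Q : Set (Esp d)) (c : Esp d) :
    polyFace (P + Q) c = polyFace P c + polyFace Q c := by
  ext x
  constructor
  · rintro ⟨hxPQ, hxmin⟩
    obtain ⟨p, hp, q, hq, rfl⟩ := Set.mem_add.1 hxPQ
    refine Set.mem_add.2 ⟨p, ⟨hp, fun p' hp' => ?_⟩, q, ⟨hq, fun q' hq' => ?_⟩, rfl⟩
    · have := hxmin (p' + q) (Set.add_mem_add hp' hq)
      rw [inner_add_right, inner_add_right] at this
      linarith
    · have := hxmin (p + q') (Set.add_mem_add hp hq')
      rw [inner_add_right, inner_add_right] at this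
      linarith
  · rintro hx
    obtain ⟨p, ⟨hp, hpmin⟩, q, ⟨hq, hqmin⟩, rfl⟩ := Set.mem_add.1 hx
    refine ⟨Set.add_mem_add hp hq, fun y hy => ?_⟩
    obtain ⟨p', hp', q', hq', rfl⟩ := Set.mem_add.1 hy
    rw [inner_add_right, inner_add_right]
    exact add_le_add (hpmin p' hp') (hqmin q' hq')

lemma vertex_unique_decomp {P Q : Set (Esp d)} {w p p' q q' : Esp d}
    (hw : w ∈ polyVerts (P + Q)) (hp : p ∈ P) (hq : q ∈ Q) (hp' : p' ∈ P) (hq' : q' ∈ Q)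
    (h1 : p + q = w) (h2 : p' + q' = w) : p = p' ∧ q = q' := by
  obtain ⟨hwPQ, hwext⟩ := mem_extremePoints.1 hw
  have hx : p + q' ∈ P + Q := Set.add_mem_add hp hq'
  have hy : p' + q ∈ P + Q := Set.add_mem_add hp' hq
  have hmid : w ∈ openSegment ℝ (p + q') (p' + q) := by
    refine ⟨1/2, 1/2, by norm_num, by norm_num, by norm_num, ?_⟩
    have hsum : (p + q') + (p' + q) = w + w := by
      calc (p + q') + (p' + q) = (p + q) + (p' + q') := by abel
        _ = w + w := by rw [h1, h2]
    calc ((1:ℝ)/2) • (p + q') + ((1:ℝ)/2) • (p' + q)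
        = ((1:ℝ)/2) • ((p + q') + (p' + q)) := by module
      _ = ((1:ℝ)/2) • (w + w) := by rw [hsum]
      _ = w := by module
  obtain ⟨hxw, hyw⟩ := hwext _ hx _ hy hmid
  have hq'' : q' = q := by
    have : p + q' = p + q := by rw [hxw, ← h1]
    exact add_left_cancel this
  have hp'' : p' = p := by
    have : p' + q = p + q := by rw [hyw, ← h1]
    exact add_right_cancel this
  exact ⟨hp''.symm, hq''.symm⟩

section Polytope

variable {P : Set (Esp d)}

lemma IsPolytope.nonempty (hP : IsPolytope P) : P.Nonempty := by
  obtain ⟨s, hs, rfl⟩ := hP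
  exact (Finset.coe_nonempty.2 hs).convexHull

lemma IsPolytope.convex (hP : IsPolytope P) : Convex ℝ P := by
  obtain ⟨s, hs, rfl⟩ := hP
  exact convex_convexHull ℝ _

lemma IsPolytope.compact (hP : IsPolytope P) : IsCompact P := by
  obtain ⟨s, hs, rfl⟩ := hP
  exact s.finite_toSet.isCompact_convexHull ℝ

lemma IsPolytope.verts_finite (hP : IsPolytope P) : (polyVerts P).Finite := by
  obtain ⟨s, hs, rfl⟩ := hP
  exact s.finite_toSet.subset extremePoints_convexHull_subset

lemma IsPolytope.hull_verts (hP : IsPolytope P) :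
    P = convexHull ℝ (polyVerts P) := by
  have h1 : closure (convexHull ℝ (Set.extremePoints ℝ P)) = P :=
    closure_convexHull_extremePoints (IsPolytope.compact hP) (IsPolytope.convex hP)
  have h2 : IsClosed (convexHull ℝ (Set.extremePoints ℝ P)) :=
    ((IsPolytope.verts_finite hP).isCompact_convexHull ℝ).isClosed
  conv_lhs => rw [← h1, h2.closure_eq]
  rfl

lemma IsPolytope.verts_nonempty (hP : IsPolytope P) : (polyVerts P).Nonempty := by
  by_contra h
  rw [Set.not_nonempty_iff_eq_empty] at h
  have := IsPolytope.hull_verts hP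
  rw [h, convexHull_empty] at this
  exact (IsPolytope.nonempty hP).ne_empty this

/-- the vertex finset of a polytope -/
def vertFinset (hP : IsPolytope P) : Finset (Esp d) := (IsPolytope.verts_finite hP).toFinset

lemma coe_vertFinset (hP : IsPolytope P) : (vertFinset hP : Set (Esp d)) = polyVerts P :=
  (IsPolytope.verts_finite hP).coe_toFinset

lemma vertFinset_nonempty (hP : IsPolytope P) : (vertFinset hP).Nonempty := by
  rw [← Finset.coe_nonempty, coe_vertFinset]; exact IsPolytope.verts_nonempty hP

lemma hull_vertFinset (hP : IsPolytope P) :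
    P = convexHull ℝ ((vertFinset hP : Set (Esp d))) := by
  rw [coe_vertFinset]; exact IsPolytope.hull_verts hP

end Polytope

section Path

/-- value of the interpolated functional -/
def vval (c c'' : Esp d) (t : ℝ) (y : Esp d) : ℝ := (1 - t) * ⟪c, y⟫ + t * ⟪c'', y⟫

/-- argmin of the interpolated functional over T -/
def gmin (T : Finset (Esp d)) (c c'' : Esp d) (t : ℝ) : Finset (Esp d) :=
  T.filter (fun y => ∀ z ∈ T, vval c c'' t y ≤ vval c c'' t z)

lemma inner_interp (c c'' : Esp d) (t : ℝ) (y : Esp d) :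
    ⟪(1 - t) • c + t • c'', y⟫ = vval c c'' t y := by
  rw [inner_add_left, real_inner_smul_left, real_inner_smul_left]; rfl

lemma gmin_eq_amin (T : Finset (Esp d)) (c c'' : Esp d) (t : ℝ) :
    gmin T c c'' t = amin T ((1 - t) • c + t • c'') := by
  unfold gmin amin
  apply Finset.filter_congr
  intro y _
  simp only [inner_interp]

lemma gmin_zero (T : Finset (Esp d)) (c c'' : Esp d) : gmin T c c'' 0 = amin T c := by
  rw [gmin_eq_amin]; norm_num

lemma gmin_one (T : Finset (Esp d)) (c c'' : Esp d) : gmin T c c'' 1 = amin T c'' := by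
  rw [gmin_eq_amin]; norm_num

lemma gmin_nonempty {T : Finset (Esp d)} (hT : T.Nonempty) (c c'' : Esp d) (t : ℝ) :
    (gmin T c c'' t).Nonempty := by
  rw [gmin_eq_amin]; exact amin_nonempty hT _

lemma gmin_subset {T : Finset (Esp d)} {c c'' : Esp d} {t : ℝ} : gmin T c c'' t ⊆ T :=
  Finset.filter_subset _ _

lemma vval_continuous (c c'' y : Esp d) : Continuous (fun t : ℝ => vval c c'' t y) := by
  unfold vval; fun_prop

lemma eventually_gmin_subset {T : Finset (Esp d)} (hT : T.Nonempty) (c c'' : Esp d) (t₀ : ℝ) :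
    ∀ᶠ s in nhds t₀, gmin T c c'' s ⊆ gmin T c c'' t₀ := by
  obtain ⟨z₀, hz₀⟩ := gmin_nonempty hT c c'' t₀
  obtain ⟨hz₀T, hz₀min⟩ := Finset.mem_filter.1 hz₀
  have key : ∀ᶠ s in nhds t₀, ∀ y ∈ T \ gmin T c c'' t₀, vval c c'' s z₀ < vval c c'' s y := by
    rw [Filter.eventually_all_finset]
    intro y hy
    obtain ⟨hyT, hynot⟩ := Finset.mem_sdiff.1 hy
    have : vval c c'' t₀ z₀ < vval c c'' t₀ y := by
      rw [gmin, Finset.mem_filter, not_and] at hynot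
      push_neg at hynot
      obtain ⟨z, hz, hlt⟩ := hynot hyT
      exact lt_of_le_of_lt (hz₀min z hz) hlt
    have hcont : Continuous (fun s => vval c c'' s y - vval c c'' s z₀) :=
      (vval_continuous c c'' y).sub (vval_continuous c c'' z₀)
    have : ∀ᶠ s in nhds t₀, 0 < vval c c'' s y - vval c c'' s z₀ :=
      (hcont.tendsto t₀).eventually (eventually_gt_nhds (by linarith))
    filter_upwards [this] with s hs
    linarith
  filter_upwards [key] with s hs
  intro y hy
  obtain ⟨hyT, hymin⟩ := Finset.mem_filter.1 hy
  by_contra hynot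
  have hlt := hs y (Finset.mem_sdiff.2 ⟨hyT, hynot⟩)
  exact absurd (hymin z₀ hz₀T) (not_le.2 hlt)

/-- abstract adjacency along the sweep -/
def pAdj (T : Finset (Esp d)) (c c'' : Esp d) (y z : Esp d) : Prop :=
  y ≠ z ∧ ∃ t ∈ Set.Ioo (0:ℝ) 1, gmin T c c'' t = {y, z}

lemma sweep_reach {T : Finset (Esp d)} (hT : T.Nonempty) {c c'' v1 v2 : Esp d}
    (h0 : gmin T c c'' 0 = {v1}) (h1 : gmin T c c'' 1 = {v2})
    (hcard : ∀ t ∈ Set.Ioo (0:ℝ) 1, (gmin T c c'' t).card ≤ 2) :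
    Relation.ReflTransGen (pAdj T c c'') v1 v2 := by
  set R := Relation.ReflTransGen (pAdj T c c'') with hR
  set A : Set ℝ := {r | r ∈ Set.Icc (0:ℝ) 1 ∧ ∀ y ∈ gmin T c c'' r, R v1 y} with hA
  have h0A : (0:ℝ) ∈ A := by
    refine ⟨⟨le_refl 0, zero_le_one⟩, fun y hy => ?_⟩
    rw [h0, Finset.mem_singleton] at hy
    subst hy
    exact Relation.ReflTransGen.refl
  have hbdd : BddAbove A := ⟨1, fun x hx => hx.1.2⟩
  have hAne : A.Nonempty := ⟨0, h0A⟩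
  set a := sSup A with ha
  have ha0 : 0 ≤ a := le_csSup hbdd h0A
  have ha1 : a ≤ 1 := csSup_le hAne (fun x hx => hx.1.2)
  -- a neighborhood where gmin shrinks into gmin a
  obtain ⟨ε, hε, hsub⟩ := Metric.eventually_nhds_iff.1 (eventually_gmin_subset hT c c'' a)
  -- key : a ∈ A
  have haA : a ∈ A := by
    rcases eq_or_lt_of_le ha0 with h | hapos
    · rw [← h]; exact h0A
    · obtain ⟨s, hsA, hs⟩ := exists_lt_of_lt_csSup hAne
        (show a - min ε a < a by
          have : 0 < min ε a := lt_min hε hapos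
          linarith)
      have hsa : s ≤ a := le_csSup hbdd hsA
      rcases eq_or_lt_of_le hsa with rfl | hslt
      · exact hsA
      · have hdist : dist s a < ε := by
          rw [Real.dist_eq, abs_of_nonpos (by linarith)]
          have := min_le_left ε a
          linarith
        have hsubs : gmin T c c'' s ⊆ gmin T c c'' a := hsub hdist
        obtain ⟨z₀, hz₀⟩ := gmin_nonempty hT c c'' s
        have hz₀R : R v1 z₀ := hsA.2 z₀ hz₀
        have hz₀a : z₀ ∈ gmin T c c'' a := hsubs hz₀
        refine ⟨⟨ha0, ha1⟩, fun y hy => ?_⟩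
        rcases eq_or_ne y z₀ with rfl | hne
        · exact hz₀R
        · rcases eq_or_lt_of_le ha1 with h' | halt
          · rw [h', h1, Finset.mem_singleton] at hy hz₀a
            rw [hy, ← hz₀a] at hne
            exact absurd rfl hne
          · have hgeq : gmin T c c'' a = {z₀, y} := by
              refine (Finset.eq_of_subset_of_card_le ?_ ?_).symm
              · intro w hw
                rcases Finset.mem_insert.1 hw with rfl | hw
                · exact hz₀a
                · rw [Finset.mem_singleton] at hw; subst hw; exact hy
              · rw [Finset.card_insert_of_notMem (by simpa using (Ne.symm hne)),
                  Finset.card_singleton]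
                exact hcard a ⟨hapos, halt⟩
            exact Relation.ReflTransGen.tail hz₀R ⟨hne.symm, a, ⟨hapos, halt⟩, hgeq⟩
  -- a = 1
  have ha_eq : a = 1 := by
    by_contra hne
    have halt : a < 1 := lt_of_le_of_ne ha1 hne
    set s := min (a + ε / 2) ((a + 1) / 2) with hs
    have hsgt : a < s := by
      apply lt_min <;> linarith
    have hslt1 : s < 1 := min_lt_of_right_lt (by linarith)
    have hdist : dist s a < ε := by
      rw [Real.dist_eq, abs_of_nonneg (by linarith)]
      have := min_le_left (a + ε / 2) ((a + 1) / 2)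
      linarith
    have hsA : s ∈ A := by
      refine ⟨⟨by linarith, le_of_lt hslt1⟩, fun y hy => ?_⟩
      exact haA.2 y (hsub hdist hy)
    exact absurd (le_csSup hbdd hsA) (not_le.2 hsgt)
  rw [ha_eq] at haA
  apply haA.2
  rw [h1]
  exact Finset.mem_singleton_self v2

lemma vval_sub (c c'' : Esp d) (t : ℝ) (y z : Esp d) :
    vval c c'' t y - vval c c'' t z = (1 - t) * ⟪c, y - z⟫ + t * ⟪c'', y - z⟫ := by
  unfold vval
  rw [inner_sub_right, inner_sub_right]
  ring

lemma sweep_side {T : Finset (Esp d)} (hT : T.Nonempty) {c c'' : Esp d} {t : ℝ}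
    (ht : t ∈ Set.Ioo (0:ℝ) 1) {y z : Esp d} (hyz : y ≠ z)
    (hg : gmin T c c'' t = {y, z})
    (hnd : ¬(⟪c, y - z⟫ = 0 ∧ ⟪c'', y - z⟫ = 0)) :
    ∃ s ∈ Set.Ioo (0:ℝ) 1, gmin T c c'' s = {y} := by
  set α := ⟪c, y - z⟫ with hα
  set α' := ⟪c'', y - z⟫ with hα'
  have hy_mem : y ∈ gmin T c c'' t := by rw [hg]; simp
  have hz_mem : z ∈ gmin T c c'' t := by rw [hg]; simp
  have hyT : y ∈ T := gmin_subset hy_mem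
  have hzT : z ∈ T := gmin_subset hz_mem
  have heq : vval c c'' t y = vval c c'' t z :=
    le_antisymm ((Finset.mem_filter.1 hy_mem).2 z hzT) ((Finset.mem_filter.1 hz_mem).2 y hyT)
  have hφt : (1 - t) * α + t * α' = 0 := by rw [← vval_sub, heq, sub_self]
  have hslope : α' - α ≠ 0 := by
    intro h0
    have hαα : α = α' := by linarith
    have hz0 : α' = 0 := by
      rw [hαα] at hφt
      have : ((1 - t) + t) * α' = 0 := by linarith
      simpa using this
    exact hnd ⟨by rw [hαα]; exact hz0, hz0⟩
  have hval : ∀ s, vval c c'' s y - vval c c'' s z = (s - t) * (α' - α) := by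
    intro s
    rw [vval_sub, ← hα, ← hα']
    have : (1 - s) * α + s * α' = ((1 - t) * α + t * α') + (s - t) * (α' - α) := by ring
    rw [this, hφt, zero_add]
  obtain ⟨ε, hε, hsub⟩ := Metric.eventually_nhds_iff.1 (eventually_gmin_subset hT c c'' t)
  set δ := min (ε / 2) (min t (1 - t) / 2) with hδ
  have hδpos : 0 < δ := by
    apply lt_min
    · linarith
    · have : 0 < min t (1 - t) := lt_min ht.1 (by linarith [ht.2])
      linarith
  have hδt : δ < t := by
    have h2 := min_le_right (ε / 2) (min t (1 - t) / 2)
    have h3 := min_le_left t (1 - t)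
    linarith
  have hδ1t : δ < 1 - t := by
    have h2 := min_le_right (ε / 2) (min t (1 - t) / 2)
    have h3 := min_le_right t (1 - t)
    linarith
  have hδε : δ < ε := by
    have := min_le_left (ε / 2) (min t (1 - t) / 2)
    linarith
  -- choose the side where y is strictly better
  rcases lt_or_gt_of_ne hslope with hneg | hpos
  · -- slope negative : go right
    refine ⟨t + δ, ⟨by linarith, by linarith⟩, ?_⟩
    have hsubs : gmin T c c'' (t + δ) ⊆ {y, z} := by
      rw [← hg]
      apply hsub
      rw [Real.dist_eq, abs_of_nonneg (by linarith)]
      linarith [abs_of_nonneg hδpos.le]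
    have hstrict : vval c c'' (t + δ) y < vval c c'' (t + δ) z := by
      have := hval (t + δ)
      nlinarith
    have hzn : z ∉ gmin T c c'' (t + δ) := by
      intro hzin
      exact absurd ((Finset.mem_filter.1 hzin).2 y hyT) (not_le.2 hstrict)
    obtain ⟨w, hw⟩ := gmin_nonempty hT c c'' (t + δ)
    have hwy : w = y := by
      have := hsubs hw
      rcases Finset.mem_insert.1 this with rfl | h
      · rfl
      · rw [Finset.mem_singleton] at h; subst h; exact absurd hw hzn
    subst hwy
    apply Finset.eq_singleton_iff_unique_mem.2
    refine ⟨hw, fun x hx => ?_⟩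
    rcases Finset.mem_insert.1 (hsubs hx) with rfl | h
    · rfl
    · rw [Finset.mem_singleton] at h; subst h; exact absurd hx hzn
  · -- slope positive : go left
    refine ⟨t - δ, ⟨by linarith, by linarith⟩, ?_⟩
    have hsubs : gmin T c c'' (t - δ) ⊆ {y, z} := by
      rw [← hg]
      apply hsub
      rw [Real.dist_eq, abs_of_nonpos (by linarith)]
      linarith
    have hstrict : vval c c'' (t - δ) y < vval c c'' (t - δ) z := by
      have := hval (t - δ)
      nlinarith
    have hzn : z ∉ gmin T c c'' (t - δ) := by
      intro hzin
      exact absurd ((Finset.mem_filter.1 hzin).2 y hyT) (not_le.2 hstrict)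
    obtain ⟨w, hw⟩ := gmin_nonempty hT c c'' (t - δ)
    have hwy : w = y := by
      have := hsubs hw
      rcases Finset.mem_insert.1 this with rfl | h
      · rfl
      · rw [Finset.mem_singleton] at h; subst h; exact absurd hw hzn
    subst hwy
    apply Finset.eq_singleton_iff_unique_mem.2
    refine ⟨hw, fun x hx => ?_⟩
    rcases Finset.mem_insert.1 (hsubs hx) with rfl | h
    · rfl
    · rw [Finset.mem_singleton] at h; subst h; exact absurd hx hzn

end Path

section Generic

lemma isolate2 {a2 a3 : ℝ} {y1 y2 y3 : Esp d} (h : (a2 + a3) • y1 = a2 • y2 + a3 • y3)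
    (h2 : a2 ≠ 0) : ((a2 + a3) / a2) • y1 + (-a3 / a2) • y3 = y2 := by
  have hs : a2 • y2 = (a2 + a3) • y1 - a3 • y3 := by rw [h]; abel
  have hy2 : y2 = a2⁻¹ • ((a2 + a3) • y1 - a3 • y3) := by
    rw [← hs, inv_smul_smul₀ h2]
  rw [hy2]
  match_scalars <;> field_simp

lemma isolate1 {a2 a3 : ℝ} {y1 y2 y3 : Esp d} (h : (a2 + a3) • y1 = a2 • y2 + a3 • y3)
    (h1 : a2 + a3 ≠ 0) : (a2 / (a2 + a3)) • y2 + (a3 / (a2 + a3)) • y3 = y1 := by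
  have hy1 : y1 = (a2 + a3)⁻¹ • (a2 • y2 + a3 • y3) := by
    rw [← h, inv_smul_smul₀ h1]
  rw [hy1]
  match_scalars <;> field_simp

/-- three distinct extreme points are affinely independent (differences are linearly
independent) -/
lemma extreme_indep {Q : Set (Esp d)} {y1 y2 y3 : Esp d}
    (h1 : y1 ∈ polyVerts Q) (h2 : y2 ∈ polyVerts Q) (h3 : y3 ∈ polyVerts Q)
    (h12 : y1 ≠ y2) (h13 : y1 ≠ y3) (h23 : y2 ≠ y3)
    {r s : ℝ} (h : r • (y1 - y2) + s • (y1 - y3) = 0) : r = 0 ∧ s = 0 := by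
  obtain ⟨h1Q, h1ext⟩ := mem_extremePoints.1 h1
  obtain ⟨h2Q, h2ext⟩ := mem_extremePoints.1 h2
  obtain ⟨h3Q, h3ext⟩ := mem_extremePoints.1 h3
  by_contra hc
  have hkey : (r + s) • y1 = r • y2 + s • y3 := by
    have h' := h
    rw [smul_sub, smul_sub] at h'
    rw [add_smul]
    have : r • y1 + s • y1 - (r • y2 + s • y3) = 0 := by rw [← h']; abel
    exact sub_eq_zero.1 this
  rcases eq_or_ne r 0 with hr | hr
  · subst hr
    have hs : s ≠ 0 := fun h0 => hc ⟨rfl, h0⟩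
    rw [zero_smul, zero_add] at h
    exact h13 (sub_eq_zero.1 ((smul_eq_zero.1 h).resolve_left hs))
  rcases eq_or_ne s 0 with hs | hs
  · subst hs
    rw [zero_smul, add_zero] at h
    exact h12 (sub_eq_zero.1 ((smul_eq_zero.1 h).resolve_left hr))
  rcases eq_or_ne (r + s) 0 with hrs | hrs
  · have hs' : s = -r := by linarith
    subst hs'
    rw [neg_smul, ← sub_eq_add_neg, ← smul_sub] at h
    have heq : y1 - y2 - (y1 - y3) = y3 - y2 := by abel
    rw [heq] at h
    exact h23 (sub_eq_zero.1 ((smul_eq_zero.1 h).resolve_left hr)).symm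
  -- now r ≠ 0, s ≠ 0, r + s ≠ 0
  have hy1eq := isolate1 hkey hrs
  have hy2eq := isolate2 hkey hr
  have hy3eq : ((s + r) / s) • y1 + (-r / s) • y2 = y3 := by
    refine isolate2 (a2 := s) (a3 := r) (y2 := y3) (y3 := y2) ?_ hs
    rw [add_comm s r, hkey]
    abel
  rcases hr.lt_or_gt with hrneg | hrpos <;> rcases hs.lt_or_gt with hsneg | hspos <;>
    rcases hrs.lt_or_gt with hrsneg | hrspos
  · -- r<0, s<0, r+s<0 : y1 between
    have hseg : y1 ∈ openSegment ℝ y2 y3 :=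
      ⟨r / (r + s), s / (r + s), div_pos_iff.2 (Or.inr ⟨hrneg, hrsneg⟩),
        div_pos_iff.2 (Or.inr ⟨hsneg, hrsneg⟩), by field_simp, hy1eq⟩
    exact h12 ((h1ext y2 h2Q y3 h3Q hseg).1).symm
  · linarith
  · -- r<0, s>0, r+s<0 : y2 between
    have hseg : y2 ∈ openSegment ℝ y1 y3 :=
      ⟨(r + s) / r, -s / r, div_pos_iff.2 (Or.inr ⟨hrsneg, hrneg⟩),
        div_pos_iff.2 (Or.inr ⟨by linarith, hrneg⟩), by field_simp; ring, hy2eq⟩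
    exact h12 (h2ext y1 h1Q y3 h3Q hseg).1
  · -- r<0, s>0, r+s>0 : y3 between
    have hseg : y3 ∈ openSegment ℝ y1 y2 :=
      ⟨(s + r) / s, -r / s, div_pos_iff.2 (Or.inl ⟨by linarith, hspos⟩),
        div_pos_iff.2 (Or.inl ⟨by linarith, hspos⟩), by field_simp; ring, hy3eq⟩
    exact h13 (h3ext y1 h1Q y2 h2Q hseg).1
  · -- r>0, s<0, r+s<0 : y3 between
    have hseg : y3 ∈ openSegment ℝ y1 y2 :=
      ⟨(s + r) / s, -r / s, div_pos_iff.2 (Or.inr ⟨by linarith, hsneg⟩),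
        div_pos_iff.2 (Or.inr ⟨by linarith, hsneg⟩), by field_simp; ring, hy3eq⟩
    exact h13 (h3ext y1 h1Q y2 h2Q hseg).1
  · -- r>0, s<0, r+s>0 : y2 between
    have hseg : y2 ∈ openSegment ℝ y1 y3 :=
      ⟨(r + s) / r, -s / r, div_pos_iff.2 (Or.inl ⟨hrspos, hrpos⟩),
        div_pos_iff.2 (Or.inl ⟨by linarith, hrpos⟩), by field_simp; ring, hy2eq⟩
    exact h12 (h2ext y1 h1Q y3 h3Q hseg).1
  · linarith
  · -- r>0, s>0, r+s>0 : y1 between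
    have hseg : y1 ∈ openSegment ℝ y2 y3 :=
      ⟨r / (r + s), s / (r + s), div_pos_iff.2 (Or.inl ⟨hrpos, hrspos⟩),
        div_pos_iff.2 (Or.inl ⟨hspos, hrspos⟩), by field_simp, hy1eq⟩
    exact h12 ((h1ext y2 h2Q y3 h3Q hseg).1).symm

lemma gmin_card_le_two {T : Finset (Esp d)} {c c'' : Esp d}
    (hG1 : ∀ y ∈ T, ∀ z ∈ T, y ≠ z → ⟪c, y - z⟫ = 0 → ⟪c'', y - z⟫ ≠ 0)
    (hG2 : ∀ y1 ∈ T, ∀ y2 ∈ T, ∀ y3 ∈ T, y1 ≠ y2 → y1 ≠ y3 → y2 ≠ y3 →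
      ¬(⟪c, y1 - y2⟫ = 0 ∧ ⟪c, y1 - y3⟫ = 0) →
      ⟪c'', ⟪c, y1 - y3⟫ • (y1 - y2) - ⟪c, y1 - y2⟫ • (y1 - y3)⟫ ≠ 0) :
    ∀ t ∈ Set.Ioo (0:ℝ) 1, (gmin T c c'' t).card ≤ 2 := by
  rintro t ⟨ht0, ht1⟩
  by_contra hcard
  rw [not_le] at hcard
  obtain ⟨y1, y2, y3, hy1, hy2, hy3, h12, h13, h23⟩ := Finset.two_lt_card_iff.1 hcard
  have hmem : ∀ y ∈ gmin T c c'' t, ∀ z ∈ gmin T c c'' t, vval c c'' t y = vval c c'' t z := by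
    intro y hy z hz
    exact le_antisymm ((Finset.mem_filter.1 hy).2 z (gmin_subset hz))
      ((Finset.mem_filter.1 hz).2 y (gmin_subset hy))
  have hy1T : y1 ∈ T := gmin_subset hy1
  have hy2T : y2 ∈ T := gmin_subset hy2
  have hy3T : y3 ∈ T := gmin_subset hy3
  set α := ⟪c, y1 - y2⟫ with hα
  set β := ⟪c, y1 - y3⟫ with hβ
  set α' := ⟪c'', y1 - y2⟫ with hα'
  set β' := ⟪c'', y1 - y3⟫ with hβ'
  have e12 : (1 - t) * α + t * α' = 0 := by
    rw [← vval_sub, hmem y1 hy1 y2 hy2, sub_self]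
  have e13 : (1 - t) * β + t * β' = 0 := by
    rw [← vval_sub, hmem y1 hy1 y3 hy3, sub_self]
  rcases eq_or_ne α 0 with hα0 | hα0
  · have hα'0 : α' = 0 := by
      rw [hα0, mul_zero, zero_add] at e12
      rcases mul_eq_zero.1 e12 with h | h
      · exact absurd h (ne_of_gt ht0)
      · exact h
    exact hG1 y1 hy1T y2 hy2T h12 hα0 hα'0
  rcases eq_or_ne β 0 with hβ0 | hβ0
  · have hβ'0 : β' = 0 := by
      rw [hβ0, mul_zero, zero_add] at e13
      rcases mul_eq_zero.1 e13 with h | h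
      · exact absurd h (ne_of_gt ht0)
      · exact h
    exact hG1 y1 hy1T y3 hy3T h13 hβ0 hβ'0
  have hdet : β * α' - α * β' = 0 := by
    have h1 : β * ((1 - t) * α + t * α') - α * ((1 - t) * β + t * β') = 0 := by
      rw [e12, e13]; ring
    have h2 : t * (β * α' - α * β') = 0 := by linarith [h1]
    rcases mul_eq_zero.1 h2 with h | h
    · exact absurd h (ne_of_gt ht0)
    · exact h
  apply hG2 y1 hy1T y2 hy2T y3 hy3T h12 h13 h23 (fun hz => hα0 hz.1)
  rw [inner_sub_right, real_inner_smul_right, real_inner_smul_right, ← hα', ← hβ']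
  rw [← hα, ← hβ]
  linarith [hdet]

/-- vanishing set of a nontrivial affine function is finite -/
lemma affine_zero_finite {c1 c2 : ℝ} (h : c1 ≠ 0 ∨ c2 ≠ 0) :
    {t : ℝ | c1 + t * c2 = 0}.Finite := by
  rcases eq_or_ne c2 0 with hc2 | hc2
  · subst hc2
    have hc1 : c1 ≠ 0 := h.resolve_right (fun hh => hh rfl)
    convert Set.finite_empty
    ext t
    simp [hc1]
  · apply Set.Finite.subset (Set.finite_singleton (-c1 / c2))
    intro t ht
    rw [Set.mem_setOf_eq] at ht
    rw [Set.mem_singleton_iff]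
    field_simp
    linarith

lemma exists_inner_ne_zero (W : Finset (Esp d)) (hW : ∀ w ∈ W, w ≠ (0 : Esp d)) :
    ∃ z : Esp d, ∀ w ∈ W, ⟪z, w⟫ ≠ 0 := by
  classical
  induction W using Finset.induction_on with
  | empty => exact ⟨0, by simp⟩
  | @insert a s ha ih =>
    have hW' : ∀ w ∈ s, w ≠ (0 : Esp d) := fun w hw => hW w (Finset.mem_insert_of_mem hw)
    obtain ⟨z, hz⟩ := ih hW'
    have hane : a ≠ 0 := hW a (Finset.mem_insert_self a s)
    -- bad parameter set is finite
    set B : Set ℝ := {t | ⟪z, a⟫ + t * ⟪a, a⟫ = 0} ∪ ⋃ w ∈ s, {t | ⟪z, w⟫ + t * ⟪a, w⟫ = 0}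
      with hB
    have hBfin : B.Finite := by
      apply Set.Finite.union
      · exact affine_zero_finite (Or.inr (inner_self_ne_zero.2 hane))
      · apply Set.Finite.biUnion s.finite_toSet
        intro w hw
        exact affine_zero_finite (Or.inl (hz w hw))
    obtain ⟨t, ht⟩ := hBfin.infinite_compl.nonempty
    refine ⟨z + t • a, fun w hw => ?_⟩
    have hval : ⟪z + t • a, w⟫ = ⟪z, w⟫ + t * ⟪a, w⟫ := by
      rw [inner_add_left, real_inner_smul_left]
    rcases Finset.mem_insert.1 hw with rfl | hws
    · intro hzero
      exact ht (Or.inl (by simp only [Set.mem_setOf_eq, ← hval]; exact hzero))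
    · intro hzero
      refine ht (Or.inr (Set.mem_biUnion hws ?_))
      simp only [Set.mem_setOf_eq, ← hval]
      exact hzero

lemma perturb_generic {S T : Finset (Esp d)} {u v c₂ : Esp d} (z : Esp d) (W : Finset (Esp d))
    (hzW : ∀ w ∈ W, ⟪z, w⟫ ≠ 0)
    (hS : amin S c₂ = {u}) (hT : amin T c₂ = {v}) :
    ∃ c'' : Esp d, amin S c'' = {u} ∧ amin T c'' = {v} ∧ ∀ w ∈ W, ⟪c'', w⟫ ≠ 0 := by
  obtain ⟨huS, hSstr⟩ := amin_eq_singleton_iff.1 hS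
  obtain ⟨hvT, hTstr⟩ := amin_eq_singleton_iff.1 hT
  have hl : Filter.NeBot (nhdsWithin (0:ℝ) (Set.Ioi 0)) := nhdsGT_neBot 0
  -- strict inequality conditions hold eventually
  have hevS : ∀ᶠ δ in nhdsWithin (0:ℝ) (Set.Ioi 0),
      ∀ y ∈ S, y ≠ u → ⟪c₂ + δ • z, u⟫ < ⟪c₂ + δ • z, y⟫ := by
    apply Filter.Eventually.filter_mono nhdsWithin_le_nhds
    rw [Filter.eventually_all_finset]
    intro y hy
    rcases eq_or_ne y u with rfl | hne
    · filter_upwards with δ hδ; exact absurd rfl hδ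
    · have hstrict := hSstr y hy hne
      have hcont : Continuous (fun δ : ℝ => ⟪c₂ + δ • z, y⟫ - ⟪c₂ + δ • z, u⟫) := by
        simp only [inner_add_left, real_inner_smul_left]
        fun_prop
      have hev : ∀ᶠ δ in nhds (0:ℝ), 0 < ⟪c₂ + δ • z, y⟫ - ⟪c₂ + δ • z, u⟫ := by
        apply (hcont.tendsto 0).eventually (eventually_gt_nhds ?_)
        simp only [zero_smul, add_zero]
        linarith
      filter_upwards [hev] with δ hδ _
      linarith
  have hevT : ∀ᶠ δ in nhdsWithin (0:ℝ) (Set.Ioi 0),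
      ∀ y ∈ T, y ≠ v → ⟪c₂ + δ • z, v⟫ < ⟪c₂ + δ • z, y⟫ := by
    apply Filter.Eventually.filter_mono nhdsWithin_le_nhds
    rw [Filter.eventually_all_finset]
    intro y hy
    rcases eq_or_ne y v with rfl | hne
    · filter_upwards with δ hδ; exact absurd rfl hδ
    · have hstrict := hTstr y hy hne
      have hcont : Continuous (fun δ : ℝ => ⟪c₂ + δ • z, y⟫ - ⟪c₂ + δ • z, v⟫) := by
        simp only [inner_add_left, real_inner_smul_left]
        fun_prop
      have hev : ∀ᶠ δ in nhds (0:ℝ), 0 < ⟪c₂ + δ • z, y⟫ - ⟪c₂ + δ • z, v⟫ := by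
        apply (hcont.tendsto 0).eventually (eventually_gt_nhds ?_)
        simp only [zero_smul, add_zero]
        linarith
      filter_upwards [hev] with δ hδ _
      linarith
  have hevW : ∀ᶠ δ in nhdsWithin (0:ℝ) (Set.Ioi 0), ∀ w ∈ W, ⟪c₂ + δ • z, w⟫ ≠ 0 := by
    rw [Filter.eventually_all_finset]
    intro w hwW
    set δw := -⟪c₂, w⟫ / ⟪z, w⟫ with hδw
    have key : ∀ δ : ℝ, δ ≠ δw → ⟪c₂ + δ • z, w⟫ ≠ 0 := by
      intro δ hδ h0
      rw [inner_add_left, real_inner_smul_left] at h0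
      apply hδ
      rw [hδw, eq_div_iff (hzW w hwW)]
      linarith
    rcases eq_or_ne δw 0 with h0 | h0
    · filter_upwards [self_mem_nhdsWithin] with δ hδ
      exact key δ (by rw [h0]; exact ne_of_gt hδ)
    · apply Filter.Eventually.filter_mono nhdsWithin_le_nhds
      filter_upwards [eventually_ne_nhds (Ne.symm h0)] with δ hδ
      exact key δ hδ
  obtain ⟨δ, hδS, hδT, hδW⟩ := (hevS.and (hevT.and hevW)).exists
  exact ⟨c₂ + δ • z, amin_eq_singleton_iff.2 ⟨huS, hδS⟩,
    amin_eq_singleton_iff.2 ⟨hvT, hδT⟩, hδW⟩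

lemma perturb_select {S T : Finset (Esp d)} (hT : T.Nonempty) {u c₀ : Esp d}
    (hS : amin S c₀ = {u}) :
    ∃ v ∈ T, ∃ c : Esp d, amin S c = {u} ∧ amin T c = {v} := by
  classical
  obtain ⟨huS, hSstr⟩ := amin_eq_singleton_iff.1 hS
  set M := amin T c₀ with hM
  have hMne : M.Nonempty := amin_nonempty hT c₀
  -- a vector z injective on differences of M
  set W : Finset (Esp d) :=
    ((M ×ˢ M).filter (fun p => p.1 ≠ p.2)).image (fun p => p.1 - p.2) with hW
  have hWne : ∀ w ∈ W, w ≠ (0 : Esp d) := by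
    intro w hw
    obtain ⟨p, hp, rfl⟩ := Finset.mem_image.1 hw
    exact sub_ne_zero.2 (Finset.mem_filter.1 hp).2
  obtain ⟨z, hz⟩ := exists_inner_ne_zero W hWne
  obtain ⟨v, hvM⟩ := amin_nonempty hMne z
  obtain ⟨hvM', hvmin⟩ := mem_amin.1 hvM
  have hvT : v ∈ T := amin_subset hvM'
  have hvstrict : ∀ y ∈ M, y ≠ v → ⟪z, v⟫ < ⟪z, y⟫ := by
    intro y hy hne
    rcases lt_or_ge ⟪z, v⟫ ⟪z, y⟫ with h | h
    · exact h
    have heq : ⟪z, y⟫ = ⟪z, v⟫ := le_antisymm h (hvmin y hy)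
    have : ⟪z, y - v⟫ = 0 := by rw [inner_sub_right]; linarith
    exact absurd this (hz _ (Finset.mem_image.2 ⟨(y, v),
      Finset.mem_filter.2 ⟨Finset.mem_product.2 ⟨hy, hvM'⟩, hne⟩, rfl⟩))
  have hl : Filter.NeBot (nhdsWithin (0:ℝ) (Set.Ioi 0)) := nhdsGT_neBot 0
  have hevS : ∀ᶠ δ in nhdsWithin (0:ℝ) (Set.Ioi 0),
      ∀ y ∈ S, y ≠ u → ⟪c₀ + δ • z, u⟫ < ⟪c₀ + δ • z, y⟫ := by
    apply Filter.Eventually.filter_mono nhdsWithin_le_nhds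
    rw [Filter.eventually_all_finset]
    intro y hy
    rcases eq_or_ne y u with rfl | hne
    · filter_upwards with δ hδ; exact absurd rfl hδ
    · have hstrict := hSstr y hy hne
      have hcont : Continuous (fun δ : ℝ => ⟪c₀ + δ • z, y⟫ - ⟪c₀ + δ • z, u⟫) := by
        simp only [inner_add_left, real_inner_smul_left]
        fun_prop
      have hev : ∀ᶠ δ in nhds (0:ℝ), 0 < ⟪c₀ + δ • z, y⟫ - ⟪c₀ + δ • z, u⟫ := by
        apply (hcont.tendsto 0).eventually (eventually_gt_nhds ?_)
        simp only [zero_smul, add_zero]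
        linarith
      filter_upwards [hev] with δ hδ _
      linarith
  have hevT : ∀ᶠ δ in nhdsWithin (0:ℝ) (Set.Ioi 0),
      ∀ y ∈ T, y ≠ v → ⟪c₀ + δ • z, v⟫ < ⟪c₀ + δ • z, y⟫ := by
    rw [Filter.eventually_all_finset]
    intro y hy
    rcases eq_or_ne y v with rfl | hne
    · filter_upwards with δ hδ; exact absurd rfl hδ
    by_cases hyM : y ∈ M
    case neg =>
      -- y not a c₀-minimizer : strict at δ = 0
      have hvmin₀ : ∀ w ∈ T, ⟪c₀, v⟫ ≤ ⟪c₀, w⟫ := (mem_amin.1 hvM').2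
      have hstrict : ⟪c₀, v⟫ < ⟪c₀, y⟫ := by
        rw [hM, amin, Finset.mem_filter, not_and] at hyM
        push_neg at hyM
        obtain ⟨w, hwT, hlt⟩ := hyM hy
        exact lt_of_le_of_lt (hvmin₀ w hwT) hlt
      apply Filter.Eventually.filter_mono nhdsWithin_le_nhds
      have hcont : Continuous (fun δ : ℝ => ⟪c₀ + δ • z, y⟫ - ⟪c₀ + δ • z, v⟫) := by
        simp only [inner_add_left, real_inner_smul_left]
        fun_prop
      have hev : ∀ᶠ δ in nhds (0:ℝ), 0 < ⟪c₀ + δ • z, y⟫ - ⟪c₀ + δ • z, v⟫ := by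
        apply (hcont.tendsto 0).eventually (eventually_gt_nhds ?_)
        simp only [zero_smul, add_zero]
        linarith
      filter_upwards [hev] with δ hδ _
      linarith
    case pos =>
      -- y ∈ M : use z-strictness for all positive δ
      have heq : ⟪c₀, v⟫ = ⟪c₀, y⟫ :=
        le_antisymm ((mem_amin.1 hvM').2 y hy) ((mem_amin.1 hyM).2 v (amin_subset hvM'))
      have hzlt := hvstrict y hyM hne
      filter_upwards [self_mem_nhdsWithin] with δ hδ _
      rw [Set.mem_Ioi] at hδ
      rw [inner_add_left, inner_add_left, real_inner_smul_left, real_inner_smul_left]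
      have := mul_lt_mul_of_pos_left hzlt hδ
      linarith
  obtain ⟨δ, hδS, hδT⟩ := (hevS.and hevT).exists
  exact ⟨v, hvT, c₀ + δ • z, amin_eq_singleton_iff.2 ⟨huS, hδS⟩,
    amin_eq_singleton_iff.2 ⟨hvT, hδT⟩⟩

end Generic

section Assembly

lemma amin_combo {S : Finset (Esp d)} {u c c'' : Esp d} (hc : amin S c = {u})
    (hc'' : amin S c'' = {u}) {t : ℝ} (ht : t ∈ Set.Icc (0:ℝ) 1) :
    amin S ((1 - t) • c + t • c'') = {u} := by
  obtain ⟨huS, h1⟩ := amin_eq_singleton_iff.1 hc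
  obtain ⟨-, h2⟩ := amin_eq_singleton_iff.1 hc''
  refine amin_eq_singleton_iff.2 ⟨huS, fun y hy hne => ?_⟩
  rw [inner_interp, inner_interp]
  unfold vval
  have hA := h1 y hy hne
  have hB := h2 y hy hne
  rcases eq_or_lt_of_le ht.1 with h0 | h0
  · rw [← h0]
    simp only [sub_zero, one_mul, zero_mul, add_zero]
    exact hA
  · have e2 : t * ⟪c'', u⟫ < t * ⟪c'', y⟫ := mul_lt_mul_of_pos_left hB h0
    have e1 : (1 - t) * ⟪c, u⟫ ≤ (1 - t) * ⟪c, y⟫ :=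
      mul_le_mul_of_nonneg_left hA.le (by linarith [ht.2])
    linarith

lemma add_eq_singleton {A B : Set (Esp d)} (hA : A.Nonempty) (hB : B.Nonempty) {x : Esp d}
    (h : A + B = {x}) : ∃ p q, A = {p} ∧ B = {q} ∧ p + q = x := by
  obtain ⟨p, hp⟩ := hA
  obtain ⟨q, hq⟩ := hB
  have hpq : p + q = x := by
    have := Set.add_mem_add hp hq; rw [h] at this; exact this
  refine ⟨p, q, ?_, ?_, hpq⟩
  · ext p'
    simp only [Set.mem_singleton_iff]
    constructor
    · intro hp'
      have h1 : p' + q = x := by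
        have := Set.add_mem_add hp' hq; rw [h] at this; exact this
      have h2 : p' + q = p + q := by rw [h1, hpq]
      exact add_right_cancel h2
    · rintro rfl; exact hp
  · ext q'
    simp only [Set.mem_singleton_iff]
    constructor
    · intro hq'
      have h1 : p + q' = x := by
        have := Set.add_mem_add hp hq'; rw [h] at this; exact this
      have h2 : p + q' = p + q := by rw [h1, hpq]
      exact add_left_cancel h2
    · rintro rfl; exact hq

lemma singleton_add_segment (u y z : Esp d) :
    ({u} : Set (Esp d)) + segment ℝ y z = segment ℝ (u + y) (u + z) := by
  rw [← convexHull_pair, ← convexHull_singleton (𝕜 := ℝ) u, ← convexHull_add]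
  have : ({u} : Set (Esp d)) + {y, z} = {u + y, u + z} := by
    rw [Set.singleton_add, Set.image_pair]
  rw [this, convexHull_pair]

variable {P Q : Set (Esp d)}

lemma face_P_singleton (hP : IsPolytope P) {c u : Esp d}
    (hSc : amin (vertFinset hP) c = {u}) : polyFace P c = {u} := by
  conv_lhs => rw [hull_vertFinset hP]
  exact (face_singleton_iff (vertFinset_nonempty hP)).2 hSc

lemma gamma_mem (hP : IsPolytope P) (hQ : IsPolytope Q) {u v c : Esp d}
    (hSc : amin (vertFinset hP) c = {u}) (hTc : amin (vertFinset hQ) c = {v}) :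
    u + v ∈ gammaVerts P Q u := by
  have hfP : polyFace P c = {u} := face_P_singleton hP hSc
  have hfQ : polyFace Q c = {v} := face_P_singleton hQ hTc
  have hface : polyFace (P + Q) c = {u + v} := by
    rw [face_add, hfP, hfQ, Set.singleton_add_singleton]
  refine ⟨face_singleton_extreme hface, v, ?_, rfl⟩
  have hvT : v ∈ vertFinset hQ := amin_subset (by rw [hTc]; exact Finset.mem_singleton_self v)
  rw [← coe_vertFinset hQ]
  exact_mod_cast hvT

lemma face_pair_segment (hP : IsPolytope P) (hQ : IsPolytope Q) {c u y z : Esp d}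
    (hSc : amin (vertFinset hP) c = {u}) (hTc : amin (vertFinset hQ) c = ({y, z} : Finset (Esp d))) :
    polyFace (P + Q) c = segment ℝ (u + y) (u + z) := by
  have hfP : polyFace P c = {u} := face_P_singleton hP hSc
  have hfQ : polyFace Q c = segment ℝ y z := by
    conv_lhs => rw [hull_vertFinset hQ]
    rw [face_hull (vertFinset hQ) (vertFinset_nonempty hQ) c, hTc]
    have : (({y, z} : Finset (Esp d)) : Set (Esp d)) = ({y, z} : Set (Esp d)) := by simp
    rw [this, convexHull_pair]
  rw [face_add, hfP, hfQ, singleton_add_segment]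

end Assembly

end Aux

open Aux in
theorem stmt15 {d : ℕ} (P Q : Set (Esp d)) (hP : IsPolytope P) (hQ : IsPolytope Q)
    (u : Esp d) (hu : u ∈ polyVerts P) :
    (gammaVerts P Q u).Nonempty ∧
      ((polyGraph (P + Q)).induce (gammaVerts P Q u)).Connected := by
  classical
  set S := vertFinset hP with hSdef
  set T := vertFinset hQ with hTdef
  have hSne : S.Nonempty := vertFinset_nonempty hP
  have hTne : T.Nonempty := vertFinset_nonempty hQ
  have hPS : P = convexHull ℝ (S : Set (Esp d)) := hull_vertFinset hP
  have hQT : Q = convexHull ℝ (T : Set (Esp d)) := hull_vertFinset hQ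
  have hPQhull : P + Q = convexHull ℝ ((S + T : Finset (Esp d)) : Set (Esp d)) := by
    rw [Finset.coe_add, convexHull_add, ← hPS, ← hQT]
  -- u is exposed in P
  have hu' : u ∈ polyVerts (convexHull ℝ (S : Set (Esp d))) := by rw [← hPS]; exact hu
  obtain ⟨c₀, hc₀⟩ := vertex_exposed hSne hu'
  -- Nonemptiness
  obtain ⟨v₀, hv₀T, c, hcS, hcT⟩ := perturb_select hTne hc₀
  have hnegam : (gammaVerts P Q u).Nonempty := ⟨u + v₀, gamma_mem hP hQ hcS hcT⟩
  refine ⟨hnegam, ?_⟩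
  rw [SimpleGraph.connected_iff]
  refine ⟨?_, hnegam.to_subtype⟩
  -- Preconnected
  intro w1 w2
  obtain ⟨hw1PQ, v1, hv1Q, hw1eq⟩ := w1.2
  obtain ⟨hw2PQ, v2, hv2Q, hw2eq⟩ := w2.2
  -- exposing functionals giving simultaneous singleton argmins
  have expose : ∀ w, w ∈ polyVerts (P + Q) → ∀ v, v ∈ polyVerts Q → w = u + v →
      ∃ c, amin S c = {u} ∧ amin T c = {v} := by
    intro w hwPQ v hvQ hweq
    have hw' : w ∈ polyVerts (convexHull ℝ ((S + T : Finset (Esp d)) : Set (Esp d))) := by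
      rw [← hPQhull]; exact hwPQ
    obtain ⟨c', hc'⟩ := vertex_exposed (hSne.add hTne) hw'
    have hface : polyFace (P + Q) c' = {w} := by
      rw [hPQhull]; exact (face_singleton_iff (hSne.add hTne)).2 hc'
    rw [face_add] at hface
    have hAne : (polyFace P c').Nonempty := by
      rw [hPS, face_hull S hSne c']
      exact (Finset.coe_nonempty.2 (amin_nonempty hSne c')).convexHull
    have hBne : (polyFace Q c').Nonempty := by
      rw [hQT, face_hull T hTne c']
      exact (Finset.coe_nonempty.2 (amin_nonempty hTne c')).convexHull
    obtain ⟨p, q, hfaceP, hfaceQ, hpq⟩ := add_eq_singleton hAne hBne hface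
    have hp_mem : p ∈ P := by
      have : p ∈ polyFace P c' := by rw [hfaceP]; exact rfl
      exact this.1
    have hq_mem : q ∈ Q := by
      have : q ∈ polyFace Q c' := by rw [hfaceQ]; exact rfl
      exact this.1
    obtain ⟨hpu, hqv⟩ := vertex_unique_decomp hwPQ hp_mem hq_mem hu.1 hvQ.1 hpq hweq.symm
    subst hpu; subst hqv
    refine ⟨c', ?_, ?_⟩
    · rw [hPS] at hfaceP
      exact (face_singleton_iff hSne).1 hfaceP
    · rw [hQT] at hfaceQ
      exact (face_singleton_iff hTne).1 hfaceQ
  obtain ⟨c1, hc1S, hc1T⟩ := expose w1.1 hw1PQ v1 hv1Q hw1eq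
  obtain ⟨c2, hc2S, hc2T⟩ := expose w2.1 hw2PQ v2 hv2Q hw2eq
  -- genericity sets
  set W1 : Finset (Esp d) :=
    ((T ×ˢ T).filter (fun p => p.1 ≠ p.2 ∧ ⟪c1, p.1 - p.2⟫ = 0)).image (fun p => p.1 - p.2)
    with hW1def
  set W2 : Finset (Esp d) :=
    (((T ×ˢ T) ×ˢ T).filter (fun p => p.1.1 ≠ p.1.2 ∧ p.1.1 ≠ p.2 ∧ p.1.2 ≠ p.2 ∧
        ¬(⟪c1, p.1.1 - p.1.2⟫ = 0 ∧ ⟪c1, p.1.1 - p.2⟫ = 0))).image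
      (fun p => ⟪c1, p.1.1 - p.2⟫ • (p.1.1 - p.1.2) - ⟪c1, p.1.1 - p.1.2⟫ • (p.1.1 - p.2))
    with hW2def
  have hTQvert : ∀ y, y ∈ T → y ∈ polyVerts Q := by
    intro y hy
    rw [← coe_vertFinset hQ]
    exact_mod_cast hy
  have hWne : ∀ w ∈ W1 ∪ W2, w ≠ (0 : Esp d) := by
    intro w hw
    rcases Finset.mem_union.1 hw with hw1 | hw2
    · obtain ⟨p, hp, rfl⟩ := Finset.mem_image.1 hw1
      exact sub_ne_zero.2 (Finset.mem_filter.1 hp).2.1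
    · obtain ⟨p, hp, rfl⟩ := Finset.mem_image.1 hw2
      obtain ⟨hmem, h12, h13, h23, hnd⟩ := Finset.mem_filter.1 hp
      obtain ⟨hmem', h3T⟩ := Finset.mem_product.1 hmem
      obtain ⟨h1T, h2T⟩ := Finset.mem_product.1 hmem'
      intro h0
      have h0' : ⟪c1, p.1.1 - p.2⟫ • (p.1.1 - p.1.2) +
          (-⟪c1, p.1.1 - p.1.2⟫) • (p.1.1 - p.2) = 0 := by
        rw [neg_smul, ← sub_eq_add_neg]; exact h0
      obtain ⟨hβ, hα⟩ := extreme_indep (hTQvert _ h1T) (hTQvert _ h2T) (hTQvert _ h3T)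
        h12 h13 h23 h0'
      exact hnd ⟨by linarith [neg_eq_zero.1 hα], hβ⟩
  obtain ⟨z, hz⟩ := exists_inner_ne_zero (W1 ∪ W2) hWne
  obtain ⟨c'', hc''S, hc''T, hc''W⟩ := perturb_generic z (W1 ∪ W2) hz hc2S hc2T
  have hG1 : ∀ y ∈ T, ∀ z' ∈ T, y ≠ z' → ⟪c1, y - z'⟫ = 0 → ⟪c'', y - z'⟫ ≠ 0 := by
    intro y hy z' hz' hne h0
    apply hc''W
    apply Finset.mem_union_left
    exact Finset.mem_image.2 ⟨(y, z'),
      Finset.mem_filter.2 ⟨Finset.mem_product.2 ⟨hy, hz'⟩, hne, h0⟩, rfl⟩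
  have hG2 : ∀ y1 ∈ T, ∀ y2 ∈ T, ∀ y3 ∈ T, y1 ≠ y2 → y1 ≠ y3 → y2 ≠ y3 →
      ¬(⟪c1, y1 - y2⟫ = 0 ∧ ⟪c1, y1 - y3⟫ = 0) →
      ⟪c'', ⟪c1, y1 - y3⟫ • (y1 - y2) - ⟪c1, y1 - y2⟫ • (y1 - y3)⟫ ≠ 0 := by
    intro y1 hy1 y2 hy2 y3 hy3 h12 h13 h23 hnd
    apply hc''W
    apply Finset.mem_union_right
    exact Finset.mem_image.2 ⟨((y1, y2), y3),
      Finset.mem_filter.2 ⟨Finset.mem_product.2 ⟨Finset.mem_product.2 ⟨hy1, hy2⟩, hy3⟩,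
        h12, h13, h23, hnd⟩, rfl⟩
  have hcard := gmin_card_le_two hG1 hG2
  have hreach : Relation.ReflTransGen (pAdj T c1 c'') v1 v2 :=
    sweep_reach hTne (by rw [gmin_zero]; exact hc1T) (by rw [gmin_one]; exact hc''T) hcard
  -- lifting abstract adjacency to the induced graph
  have hlift : ∀ y z', pAdj T c1 c'' y z' → (u + y ∈ gammaVerts P Q u) ∧
      (u + z' ∈ gammaVerts P Q u) ∧ polyAdj (P + Q) (u + y) (u + z') := by
    rintro y z' ⟨hyz, t, htIoo, hgt⟩
    have hyT : y ∈ T := gmin_subset (by rw [hgt]; simp)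
    have hz'T : z' ∈ T := gmin_subset (by rw [hgt]; simp)
    have hnd : ¬(⟪c1, y - z'⟫ = 0 ∧ ⟪c'', y - z'⟫ = 0) := by
      rintro ⟨ha, hb⟩
      exact hG1 y hyT z' hz'T hyz ha hb
    have hnd' : ¬(⟪c1, z' - y⟫ = 0 ∧ ⟪c'', z' - y⟫ = 0) := by
      rintro ⟨ha, hb⟩
      exact hG1 z' hz'T y hyT hyz.symm ha hb
    -- y is a vertex of the sum
    obtain ⟨sy, hsyIoo, hgsy⟩ := sweep_side hTne htIoo hyz hgt hnd
    have hyam : amin T ((1 - sy) • c1 + sy • c'') = {y} := by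
      rw [← gmin_eq_amin]; exact hgsy
    have hySam : amin S ((1 - sy) • c1 + sy • c'') = {u} :=
      amin_combo hc1S hc''S ⟨hsyIoo.1.le, hsyIoo.2.le⟩
    have hymem : u + y ∈ gammaVerts P Q u := gamma_mem hP hQ hySam hyam
    -- z' likewise
    have hgt' : gmin T c1 c'' t = {z', y} := by rw [hgt]; exact Finset.pair_comm y z'
    obtain ⟨sz, hszIoo, hgsz⟩ := sweep_side hTne htIoo hyz.symm hgt' hnd'
    have hzam : amin T ((1 - sz) • c1 + sz • c'') = {z'} := by
      rw [← gmin_eq_amin]; exact hgsz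
    have hzSam : amin S ((1 - sz) • c1 + sz • c'') = {u} :=
      amin_combo hc1S hc''S ⟨hszIoo.1.le, hszIoo.2.le⟩
    have hzmem : u + z' ∈ gammaVerts P Q u := gamma_mem hP hQ hzSam hzam
    refine ⟨hymem, hzmem, ?_, hymem.1, hzmem.1, ?_⟩
    · intro h
      exact hyz (add_left_cancel h)
    · refine ⟨(1 - t) • c1 + t • c'', ?_⟩
      have htam : amin T ((1 - t) • c1 + t • c'') = ({y, z'} : Finset (Esp d)) := by
        rw [← gmin_eq_amin]; exact hgt
      have htSam : amin S ((1 - t) • c1 + t • c'') = {u} :=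
        amin_combo hc1S hc''S ⟨htIoo.1.le, htIoo.2.le⟩
      exact face_pair_segment hP hQ htSam htam
  -- build reachability
  have hm1 : u + v1 ∈ gammaVerts P Q u := by rw [← hw1eq]; exact w1.2
  have hm2 : u + v2 ∈ gammaVerts P Q u := by rw [← hw2eq]; exact w2.2
  have key : ∀ y, Relation.ReflTransGen (pAdj T c1 c'') v1 y →
      ∀ hym : u + y ∈ gammaVerts P Q u,
      ((polyGraph (P + Q)).induce (gammaVerts P Q u)).Reachable ⟨u + v1, hm1⟩ ⟨u + y, hym⟩ := by
    intro y hy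
    induction hy with
    | refl => intro hym; exact SimpleGraph.Reachable.refl _
    | @tail b c₃ hpre hadj ih =>
      intro hym
      obtain ⟨hbm, hcm, hadj'⟩ := hlift _ _ hadj
      refine (ih hbm).trans ?_
      exact SimpleGraph.Adj.reachable
        (show ((polyGraph (P + Q)).induce (gammaVerts P Q u)).Adj ⟨u + b, hbm⟩ ⟨u + c₃, hym⟩
          from hadj')
  have hfinal := key v2 hreach hm2
  have he1 : w1 = (⟨u + v1, hm1⟩ : (gammaVerts P Q u)) := Subtype.ext hw1eq
  have he2 : w2 = (⟨u + v2, hm2⟩ : (gammaVerts P Q u)) := Subtype.ext hw2eq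
  rw [he1, he2]
  exact hfinal
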